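/- Define, for real symmetric matrices L_a, L_b (sizes n_a ≤ n_b) and fixed t > 0, D_reg(L_a, L_b | t) = inf over α > 0 and over P with P^T P = I of [ ||P e^{(t/α) L_a} − e^{tα L_b} P||_F + ||e^{(t/α) L_a} − e^{t L_a}||_F + ||e^{t L_b} P − e^{tα L_b} P||_F ]. Then for L₁, L₂, L₃ of sizes n₁ ≤ n₂ ≤ n₃ and fixed t: D_reg(L₁, L₃ | t) ≤ D_reg(L₁, L₂ | t) + D_reg(L₂, L₃ | t). -/

import Mathlib

open Matrix NormedSpace

attribute [local instance] Matrix.frobeniusSeminormedAddCommGroup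

/-- Frobenius norm of a real matrix. -/
noncomputable def frob {a b : ℕ} (A : Matrix (Fin a) (Fin b) ℝ) : ℝ :=
  Real.sqrt (Matrix.trace (Aᵀ * A))

lemma trace_eq_sum_sq {a b : ℕ} (A : Matrix (Fin a) (Fin b) ℝ) :
    Matrix.trace (Aᵀ * A) = ∑ j, ∑ i, (A i j)^2 := by
  simp [Matrix.trace, Matrix.mul_apply, Matrix.diag, sq]

lemma frob_eq_norm {a b : ℕ} (A : Matrix (Fin a) (Fin b) ℝ) : frob A = ‖A‖ := by
  rw [frob, trace_eq_sum_sq, Matrix.frobenius_norm_def, Real.sqrt_eq_rpow]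
  congr 1
  rw [Finset.sum_comm]
  congr 1; ext i; congr 1; ext j
  rw [show ((2:ℝ)) = ((2:ℕ):ℝ) by norm_num, Real.rpow_natCast]
  simp [sq_abs, sq]

lemma frob_nonneg {a b : ℕ} (A : Matrix (Fin a) (Fin b) ℝ) : 0 ≤ frob A :=
  Real.sqrt_nonneg _

lemma traceAtA_nonneg {a b : ℕ} (A : Matrix (Fin a) (Fin b) ℝ) :
    0 ≤ Matrix.trace (Aᵀ * A) := by
  rw [trace_eq_sum_sq]
  positivity

lemma frob_mul_left {a b c : ℕ} (Q : Matrix (Fin c) (Fin a) ℝ) (hQ : Qᵀ * Q = 1)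
    (M : Matrix (Fin a) (Fin b) ℝ) : frob (Q * M) = frob M := by
  unfold frob
  congr 1
  rw [Matrix.transpose_mul, Matrix.mul_assoc, ← Matrix.mul_assoc Qᵀ, hQ, Matrix.one_mul]

lemma frob_mul_right {a b c : ℕ} (P : Matrix (Fin b) (Fin c) ℝ) (hP : Pᵀ * P = 1)
    (M : Matrix (Fin a) (Fin b) ℝ) : frob (M * P) ≤ frob M := by
  unfold frob
  apply Real.sqrt_le_sqrt
  have hEE : (P * Pᵀ) * (P * Pᵀ) = P * Pᵀ := by
    rw [Matrix.mul_assoc, ← Matrix.mul_assoc Pᵀ, hP, Matrix.one_mul]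
  have key : Matrix.trace ((M * P)ᵀ * (M * P)) = Matrix.trace ((Mᵀ * M) * (P * Pᵀ)) := by
    rw [Matrix.transpose_mul, Matrix.mul_assoc Pᵀ Mᵀ (M * P), Matrix.trace_mul_comm,
      ← Matrix.mul_assoc Mᵀ M P, Matrix.mul_assoc (Mᵀ * M) P Pᵀ]
  have expand_tr : Matrix.trace ((M - M * (P * Pᵀ))ᵀ * (M - M * (P * Pᵀ))) =
      Matrix.trace (Mᵀ * M) - Matrix.trace ((Mᵀ * M) * (P * Pᵀ)) := by
    simp only [Matrix.transpose_sub, Matrix.transpose_mul, Matrix.transpose_transpose,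
      Matrix.sub_mul, Matrix.mul_sub, Matrix.trace_sub]
    have c1 : Matrix.trace (Mᵀ * (M * (P * Pᵀ))) = Matrix.trace ((Mᵀ * M) * (P * Pᵀ)) := by
      rw [Matrix.mul_assoc]
    have c2 : Matrix.trace ((P * Pᵀ) * (Mᵀ * (M * (P * Pᵀ)))) =
        Matrix.trace ((Mᵀ * M) * (P * Pᵀ)) := by
      rw [Matrix.trace_mul_comm, ← Matrix.mul_assoc Mᵀ M (P * Pᵀ),
        Matrix.mul_assoc (Mᵀ * M) (P * Pᵀ) (P * Pᵀ), hEE]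
    have c3 : Matrix.trace ((P * Pᵀ) * (Mᵀ * M)) = Matrix.trace ((Mᵀ * M) * (P * Pᵀ)) :=
      Matrix.trace_mul_comm _ _
    rw [Matrix.mul_assoc (P * Pᵀ) Mᵀ M, Matrix.mul_assoc (P * Pᵀ) Mᵀ (M * (P * Pᵀ)), c1, c2, c3]
    ring
  have h3 := traceAtA_nonneg (M - M * (P * Pᵀ))
  rw [expand_tr] at h3
  rw [key]
  linarith

lemma frob_sub_comm {a b : ℕ} (A B : Matrix (Fin a) (Fin b) ℝ) :
    frob (A - B) = frob (B - A) := by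
  rw [frob_eq_norm, frob_eq_norm, norm_sub_rev]

lemma exists_orth (a b : ℕ) (h : a ≤ b) :
    ∃ P : Matrix (Fin b) (Fin a) ℝ, Pᵀ * P = 1 := by
  refine ⟨Matrix.of fun i j => if i = Fin.castLE h j then 1 else 0, ?_⟩
  ext j k
  simp only [Matrix.mul_apply, Matrix.transpose_apply, Matrix.of_apply, ite_mul, one_mul,
    zero_mul, Matrix.one_apply]
  rw [Finset.sum_ite_eq' Finset.univ (Fin.castLE h j)]
  simp [Fin.castLE_inj, eq_comm]

lemma frob_zero {a b : ℕ} : frob (0 : Matrix (Fin a) (Fin b) ℝ) = 0 := by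
  unfold frob; simp

lemma frob_add_le {a b : ℕ} (A B : Matrix (Fin a) (Fin b) ℝ) :
    frob (A + B) ≤ frob A + frob B := by
  rw [frob_eq_norm, frob_eq_norm, frob_eq_norm]; exact norm_add_le _ _

/-- The regularized graph diffusion distance at fixed time `t`. -/
noncomputable def Dreg (t : ℝ) {a b : ℕ} (La : Matrix (Fin a) (Fin a) ℝ)
    (Lb : Matrix (Fin b) (Fin b) ℝ) : ℝ :=
  sInf {x : ℝ | ∃ α : ℝ, 0 < α ∧ ∃ P : Matrix (Fin b) (Fin a) ℝ, Pᵀ * P = 1 ∧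
    x = frob (P * exp ((t / α) • La) - exp ((t * α) • Lb) * P) +
        frob (exp ((t / α) • La) - exp (t • La)) +
        frob (exp (t • Lb) * P - exp ((t * α) • Lb) * P)}

def Sset (t : ℝ) {a b : ℕ} (La : Matrix (Fin a) (Fin a) ℝ)
    (Lb : Matrix (Fin b) (Fin b) ℝ) : Set ℝ :=
  {x : ℝ | ∃ α : ℝ, 0 < α ∧ ∃ P : Matrix (Fin b) (Fin a) ℝ, Pᵀ * P = 1 ∧
    x = frob (P * exp ((t / α) • La) - exp ((t * α) • Lb) * P) +
        frob (exp ((t / α) • La) - exp (t • La)) +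
        frob (exp (t • Lb) * P - exp ((t * α) • Lb) * P)}

lemma Sset_nonempty (t : ℝ) {a b : ℕ} (h : a ≤ b) (La : Matrix (Fin a) (Fin a) ℝ)
    (Lb : Matrix (Fin b) (Fin b) ℝ) : (Sset t La Lb).Nonempty := by
  obtain ⟨P, hP⟩ := exists_orth a b h
  exact ⟨_, 1, one_pos, P, hP, rfl⟩

lemma Sset_bddBelow (t : ℝ) {a b : ℕ} (La : Matrix (Fin a) (Fin a) ℝ)
    (Lb : Matrix (Fin b) (Fin b) ℝ) : BddBelow (Sset t La Lb) := by
  refine ⟨0, fun x hx => ?_⟩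
  obtain ⟨α, hα, P, hP, rfl⟩ := hx
  have := frob_nonneg (P * exp ((t / α) • La) - exp ((t * α) • Lb) * P)
  have := frob_nonneg (exp ((t / α) • La) - exp (t • La))
  have := frob_nonneg (exp (t • Lb) * P - exp ((t * α) • Lb) * P)
  linarith

lemma key_bound {n₁ n₂ n₃ : ℕ} (t : ℝ)
    (L₁ : Matrix (Fin n₁) (Fin n₁) ℝ) (L₂ : Matrix (Fin n₂) (Fin n₂) ℝ)
    (L₃ : Matrix (Fin n₃) (Fin n₃) ℝ)
    (x y : ℝ) (hx : x ∈ Sset t L₁ L₂) (hy : y ∈ Sset t L₂ L₃) :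
    Dreg t L₁ L₃ ≤ x + y := by
  obtain ⟨α, hα, P, hP, rfl⟩ := hx
  obtain ⟨β, hβ, Q, hQ, rfl⟩ := hy
  set E1 := exp (t • L₁)
  set A1 := exp ((t / α) • L₁)
  set B2 := exp ((t * α) • L₂)
  set E2 := exp (t • L₂)
  set A2 := exp ((t / β) • L₂)
  set B3 := exp ((t * β) • L₃)
  set E3 := exp (t • L₃)
  have hQP : (Q * P)ᵀ * (Q * P) = 1 := by
    rw [Matrix.transpose_mul, Matrix.mul_assoc, ← Matrix.mul_assoc Qᵀ, hQ, Matrix.one_mul, hP]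
  have hmem : frob ((Q * P) * exp ((t / 1) • L₁) - exp ((t * 1) • L₃) * (Q * P)) +
        frob (exp ((t / 1) • L₁) - exp (t • L₁)) +
        frob (exp (t • L₃) * (Q * P) - exp ((t * 1) • L₃) * (Q * P)) ∈
        Sset t L₁ L₃ := ⟨1, one_pos, Q * P, hQP, rfl⟩
  have h0 : Dreg t L₁ L₃ ≤ frob ((Q * P) * exp ((t / 1) • L₁) -
        exp ((t * 1) • L₃) * (Q * P)) +
        frob (exp ((t / 1) • L₁) - exp (t • L₁)) +
        frob (exp (t • L₃) * (Q * P) - exp ((t * 1) • L₃) * (Q * P)) :=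
    csInf_le (Sset_bddBelow t L₁ L₃) hmem
  rw [div_one, mul_one] at h0
  simp only [sub_self, frob_zero, add_zero] at h0
  refine h0.trans ?_
  -- main estimate
  have hsplit : (Q * P) * E1 - E3 * (Q * P) =
      Q * (P * (E1 - A1)) + Q * (P * A1 - B2 * P) + Q * (B2 * P - E2 * P) +
      (Q * (E2 - A2)) * P + (Q * A2 - B3 * Q) * P + (B3 * Q - E3 * Q) * P := by
    simp only [Matrix.mul_sub, Matrix.sub_mul, Matrix.mul_assoc]
    abel
  rw [hsplit]
  have t1 : frob (Q * (P * (E1 - A1))) = frob (A1 - E1) := by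
    rw [frob_mul_left Q hQ, frob_mul_left P hP, frob_sub_comm]
  have t2 : frob (Q * (P * A1 - B2 * P)) = frob (P * A1 - B2 * P) := frob_mul_left Q hQ _
  have t3 : frob (Q * (B2 * P - E2 * P)) = frob (E2 * P - B2 * P) := by
    rw [frob_mul_left Q hQ, frob_sub_comm]
  have t4 : frob ((Q * (E2 - A2)) * P) ≤ frob (A2 - E2) := by
    calc frob ((Q * (E2 - A2)) * P) ≤ frob (Q * (E2 - A2)) := frob_mul_right P hP _
    _ = frob (A2 - E2) := by rw [frob_mul_left Q hQ, frob_sub_comm]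
  have t5 : frob ((Q * A2 - B3 * Q) * P) ≤ frob (Q * A2 - B3 * Q) := frob_mul_right P hP _
  have t6 : frob ((B3 * Q - E3 * Q) * P) ≤ frob (E3 * Q - B3 * Q) := by
    calc frob ((B3 * Q - E3 * Q) * P) ≤ frob (B3 * Q - E3 * Q) := frob_mul_right P hP _
    _ = frob (E3 * Q - B3 * Q) := frob_sub_comm _ _
  have tri : frob (Q * (P * (E1 - A1)) + Q * (P * A1 - B2 * P) + Q * (B2 * P - E2 * P) +
      (Q * (E2 - A2)) * P + (Q * A2 - B3 * Q) * P + (B3 * Q - E3 * Q) * P) ≤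
      frob (Q * (P * (E1 - A1))) + frob (Q * (P * A1 - B2 * P)) +
      frob (Q * (B2 * P - E2 * P)) + frob ((Q * (E2 - A2)) * P) +
      frob ((Q * A2 - B3 * Q) * P) + frob ((B3 * Q - E3 * Q) * P) := by
    calc frob (Q * (P * (E1 - A1)) + Q * (P * A1 - B2 * P) + Q * (B2 * P - E2 * P) +
          (Q * (E2 - A2)) * P + (Q * A2 - B3 * Q) * P + (B3 * Q - E3 * Q) * P) ≤
        frob (Q * (P * (E1 - A1)) + Q * (P * A1 - B2 * P) + Q * (B2 * P - E2 * P) +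
          (Q * (E2 - A2)) * P + (Q * A2 - B3 * Q) * P) + frob ((B3 * Q - E3 * Q) * P) :=
          frob_add_le _ _
      _ ≤ frob (Q * (P * (E1 - A1)) + Q * (P * A1 - B2 * P) + Q * (B2 * P - E2 * P) +
          (Q * (E2 - A2)) * P) + frob ((Q * A2 - B3 * Q) * P) + frob ((B3 * Q - E3 * Q) * P) :=
          add_le_add_left (frob_add_le _ _) _
      _ ≤ frob (Q * (P * (E1 - A1)) + Q * (P * A1 - B2 * P) + Q * (B2 * P - E2 * P)) +
          frob ((Q * (E2 - A2)) * P) + frob ((Q * A2 - B3 * Q) * P) +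
          frob ((B3 * Q - E3 * Q) * P) :=
          add_le_add_left (add_le_add_left (frob_add_le _ _) _) _
      _ ≤ frob (Q * (P * (E1 - A1)) + Q * (P * A1 - B2 * P)) + frob (Q * (B2 * P - E2 * P)) +
          frob ((Q * (E2 - A2)) * P) + frob ((Q * A2 - B3 * Q) * P) +
          frob ((B3 * Q - E3 * Q) * P) :=
          add_le_add_left (add_le_add_left (add_le_add_left (frob_add_le _ _) _) _) _
      _ ≤ frob (Q * (P * (E1 - A1))) + frob (Q * (P * A1 - B2 * P)) +
          frob (Q * (B2 * P - E2 * P)) + frob ((Q * (E2 - A2)) * P) +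
          frob ((Q * A2 - B3 * Q) * P) + frob ((B3 * Q - E3 * Q) * P) :=
          add_le_add_left (add_le_add_left (add_le_add_left (add_le_add_left
            (frob_add_le _ _) _) _) _) _
  refine tri.trans ?_
  linarith [t1, t2, t3, t4, t5, t6]

theorem Dreg_triangle {n₁ n₂ n₃ : ℕ} (h12 : n₁ ≤ n₂) (h23 : n₂ ≤ n₃)
    (t : ℝ) (ht : 0 < t)
    (L₁ : Matrix (Fin n₁) (Fin n₁) ℝ) (L₂ : Matrix (Fin n₂) (Fin n₂) ℝ)
    (L₃ : Matrix (Fin n₃) (Fin n₃) ℝ)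
    (h₁ : L₁.IsSymm) (h₂ : L₂.IsSymm) (h₃ : L₃.IsSymm) :
    Dreg t L₁ L₃ ≤ Dreg t L₁ L₂ + Dreg t L₂ L₃ := by
  have ne12 := Sset_nonempty t h12 L₁ L₂
  have ne23 := Sset_nonempty t h23 L₂ L₃
  have h1 : Dreg t L₁ L₃ - sInf (Sset t L₂ L₃) ≤ sInf (Sset t L₁ L₂) := by
    refine le_csInf ne12 fun x hx => ?_
    have h2 : Dreg t L₁ L₃ - x ≤ sInf (Sset t L₂ L₃) := by
      refine le_csInf ne23 fun y hy => ?_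
      linarith [key_bound t L₁ L₂ L₃ x y hx hy]
    linarith
  have e12 : Dreg t L₁ L₂ = sInf (Sset t L₁ L₂) := rfl
  have e23 : Dreg t L₂ L₃ = sInf (Sset t L₂ L₃) := rfl
  rw [e12, e23]
  linarith
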